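/- Let C₁, C₂, C₃ be circles through two distinct points x and y, with centers c₁, c₂, c₃ respectively on the perpendicular bisector ℓ of segment xy, such that c₂ lies strictly between c₁ and c₃ on ℓ. Then encl(C₁) ∩ encl(C₃) ⊆ encl(C₂), and moreover (closure of encl(C₁)) ∩ (closure of encl(C₃)) minus {x,y} is contained in the open disk encl(C₂). -/

import Mathlib

noncomputable section

open Metric
open scoped RealInnerProductSpace

private lemma key_between {E : Type*} [NormedAddCommGroup E] [InnerProductSpace ℝ E]
    (p x c₁ c₃ : E) (a b : ℝ) (ha : 0 < a) (hb : 0 < b) (hab : a + b = 1)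
    (h1 : dist c₁ p ≤ dist c₁ x) (h3 : dist c₃ p ≤ dist c₃ x)
    (hs : dist c₁ p < dist c₁ x ∨ dist c₃ p < dist c₃ x) :
    dist (a • c₁ + b • c₃) p < dist (a • c₁ + b • c₃) x := by
  have expand : ∀ q : E, dist (a • c₁ + b • c₃) q ^ 2
      = a * dist c₁ q ^ 2 + b * dist c₃ q ^ 2 - a * b * ‖c₁ - c₃‖ ^ 2 := by
    intro q
    have hdiff := norm_sub_sq_real (c₁ - q) (c₃ - q)
    have hsub : (c₁ - q) - (c₃ - q) = c₁ - c₃ := by abel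
    rw [hsub] at hdiff
    have hq : (a • c₁ + b • c₃) - q = a • (c₁ - q) + b • (c₃ - q) := by
      rw [smul_sub, smul_sub]
      have hqq : q = a • q + b • q := by rw [← add_smul, hab, one_smul]
      nth_rewrite 1 [hqq]
      abel
    rw [dist_eq_norm, dist_eq_norm, dist_eq_norm, hq, norm_add_sq_real,
      norm_smul, norm_smul, real_inner_smul_left, real_inner_smul_right,
      Real.norm_eq_abs, Real.norm_eq_abs, abs_of_pos ha, abs_of_pos hb]
    linear_combination (a * ‖c₁ - q‖ ^ 2 + b * ‖c₃ - q‖ ^ 2) * hab + (a * b) * hdiff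
  have e1 := expand p
  have e2 := expand x
  have q1 : dist c₁ p ^ 2 ≤ dist c₁ x ^ 2 := by
    exact pow_le_pow_left₀ dist_nonneg h1 2
  have q3 : dist c₃ p ^ 2 ≤ dist c₃ x ^ 2 := by
    exact pow_le_pow_left₀ dist_nonneg h3 2
  have hsq : dist (a • c₁ + b • c₃) p ^ 2 < dist (a • c₁ + b • c₃) x ^ 2 := by
    rcases hs with hs | hs
    · have qs : dist c₁ p ^ 2 < dist c₁ x ^ 2 := by
        exact pow_lt_pow_left₀ hs dist_nonneg (by norm_num)
      rw [e1, e2]; nlinarith [mul_lt_mul_of_pos_left qs ha, mul_le_mul_of_nonneg_left q3 hb.le]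
    · have qs : dist c₃ p ^ 2 < dist c₃ x ^ 2 := by
        exact pow_lt_pow_left₀ hs dist_nonneg (by norm_num)
      rw [e1, e2]; nlinarith [mul_lt_mul_of_pos_left qs hb, mul_le_mul_of_nonneg_left q1 ha.le]
  exact lt_of_pow_lt_pow_left₀ 2 dist_nonneg hsq

private lemma collinear_of_orth (v u w : EuclideanSpace ℝ (Fin 2)) (hv : v ≠ 0)
    (hu : ⟪v, u⟫ = 0) (hw : ⟪v, w⟫ = 0) (hu0 : u ≠ 0) : ∃ t : ℝ, w = t • u := by
  have hu' : v 0 * u 0 + v 1 * u 1 = 0 := by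
    simpa [PiLp.inner_apply, Fin.sum_univ_two, mul_comm] using hu
  have hw' : v 0 * w 0 + v 1 * w 1 = 0 := by
    simpa [PiLp.inner_apply, Fin.sum_univ_two, mul_comm] using hw
  have hvne : v 0 ≠ 0 ∨ v 1 ≠ 0 := by
    by_contra h
    push_neg at h
    apply hv
    ext i
    fin_cases i <;> simp [h.1, h.2]
  have det : u 0 * w 1 - u 1 * w 0 = 0 := by
    rcases hvne with h | h
    · have : v 0 * (u 0 * w 1 - u 1 * w 0) = 0 := by
        linear_combination w 1 * hu' - u 1 * hw'
      exact (mul_eq_zero.mp this).resolve_left h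
    · have : v 1 * (u 0 * w 1 - u 1 * w 0) = 0 := by
        linear_combination u 0 * hw' - w 0 * hu'
      exact (mul_eq_zero.mp this).resolve_left h
  have hune : u 0 ≠ 0 ∨ u 1 ≠ 0 := by
    by_contra h
    push_neg at h
    apply hu0
    ext i
    fin_cases i <;> simp [h.1, h.2]
  rcases hune with h | h
  · refine ⟨w 0 / u 0, ?_⟩
    ext i
    fin_cases i
    · show w 0 = (w 0 / u 0) * u 0
      field_simp
    · show w 1 = (w 0 / u 0) * u 1
      field_simp
      nlinarith [det]
  · refine ⟨w 1 / u 1, ?_⟩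
    ext i
    fin_cases i
    · show w 0 = (w 1 / u 1) * u 0
      field_simp
      nlinarith [det]
    · show w 1 = (w 1 / u 1) * u 1
      field_simp

private lemma eq_or_eq_of_on_two_circles (x y p c₁ c₃ : EuclideanSpace ℝ (Fin 2))
    (hxy : x ≠ y) (h₁ : dist c₁ x = dist c₁ y) (h₃ : dist c₃ x = dist c₃ y)
    (h₁₃ : c₁ ≠ c₃) (hp1 : dist c₁ p = dist c₁ x) (hp3 : dist c₃ p = dist c₃ x) :
    p = x ∨ p = y := by
  have hv : c₃ - c₁ ≠ 0 := sub_ne_zero.mpr (Ne.symm h₁₃)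
  have hu0 : x - y ≠ 0 := sub_ne_zero.mpr hxy
  -- orthogonality of c₃ - c₁ with y - x
  have o1 : ⟪c₃ - c₁, y - x⟫ = 0 := by
    have := EuclideanGeometry.inner_vsub_vsub_of_dist_eq_of_dist_eq
      (c₁ := c₁) (c₂ := c₃) (p₁ := x) (p₂ := y)
      (by rw [dist_comm x c₁, dist_comm y c₁]; exact h₁)
      (by rw [dist_comm x c₃, dist_comm y c₃]; exact h₃)
    simpa using this
  have o2 : ⟪c₃ - c₁, p - x⟫ = 0 := by
    have := EuclideanGeometry.inner_vsub_vsub_of_dist_eq_of_dist_eq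
      (c₁ := c₁) (c₂ := c₃) (p₁ := x) (p₂ := p)
      (by rw [dist_comm x c₁, dist_comm p c₁]; exact hp1.symm)
      (by rw [dist_comm x c₃, dist_comm p c₃]; exact hp3.symm)
    simpa using this
  have o1' : ⟪c₃ - c₁, x - y⟫ = 0 := by
    have : x - y = -(y - x) := by abel
    rw [this, inner_neg_right, o1, neg_zero]
  obtain ⟨t, ht⟩ := collinear_of_orth (c₃ - c₁) (x - y) (p - x) hv o1' o2 hu0
  have hp : p = x + t • (x - y) := by
    rw [← ht]; abel
  -- use circle 1 to pin down t
  have hinner : ⟪x - c₁, x - y⟫ = ‖x - y‖ ^ 2 / 2 := by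
    have hd : ‖c₁ - y‖ ^ 2 = ‖c₁ - x‖ ^ 2 := by
      rw [← dist_eq_norm, ← dist_eq_norm, ← h₁]
    have hdec : c₁ - y = (c₁ - x) + (x - y) := by abel
    rw [hdec, norm_add_sq_real] at hd
    have : ⟪c₁ - x, x - y⟫ = -(‖x - y‖ ^ 2 / 2) := by linarith
    have hneg : x - c₁ = -(c₁ - x) := by abel
    rw [hneg, inner_neg_left, this, neg_neg]
  have hq : dist c₁ p ^ 2 = dist c₁ x ^ 2 := by rw [hp1]
  have hdec2 : p - c₁ = (x - c₁) + t • (x - y) := by rw [hp]; abel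
  rw [dist_eq_norm', dist_eq_norm', hdec2, norm_add_sq_real, real_inner_smul_right,
    norm_smul, Real.norm_eq_abs, mul_pow, sq_abs, hinner] at hq
  have hnu : (0:ℝ) < ‖x - y‖ ^ 2 := pow_pos (norm_pos_iff.mpr hu0) 2
  have ht01 : t = 0 ∨ t = -1 := by
    have hfac : t * (t + 1) * ‖x - y‖ ^ 2 = 0 := by nlinarith
    have := mul_eq_zero.mp hfac
    rcases this with h | h
    · rcases mul_eq_zero.mp h with h | h
      · exact Or.inl h
      · right; linarith
    · exact absurd h (ne_of_gt hnu)
  rcases ht01 with h | h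
  · left; rw [hp, h]; simp
  · right; rw [hp, h]
    have : x + (-1 : ℝ) • (x - y) = y := by module
    rw [this]

/-- Let `C₁, C₂, C₃` be circles through two distinct points `x`, `y` (so their
centers `c₁, c₂, c₃` are equidistant from `x` and `y`, i.e. lie on the
perpendicular bisector of segment `xy`), with `c₂` strictly between `c₁` and
`c₃`.  Then `encl(C₁) ∩ encl(C₃) ⊆ encl(C₂)`, and moreover
`(closure encl(C₁)) ∩ (closure encl(C₃)) \ {x,y} ⊆ encl(C₂)`. -/
theorem encl_between_circles
    (x y c₁ c₂ c₃ : EuclideanSpace ℝ (Fin 2)) (hxy : x ≠ y)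
    (h₁ : dist c₁ x = dist c₁ y) (h₂ : dist c₂ x = dist c₂ y)
    (h₃ : dist c₃ x = dist c₃ y)
    (h₁₃ : c₁ ≠ c₃)
    (hbet : c₂ ∈ openSegment ℝ c₁ c₃) :
    Metric.ball c₁ (dist c₁ x) ∩ Metric.ball c₃ (dist c₃ x) ⊆
        Metric.ball c₂ (dist c₂ x) ∧
    (Metric.closedBall c₁ (dist c₁ x) ∩ Metric.closedBall c₃ (dist c₃ x)) \
        ({x, y} : Set (EuclideanSpace ℝ (Fin 2))) ⊆
      Metric.ball c₂ (dist c₂ x) := by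
  obtain ⟨a, b, ha, hb, hab, hc⟩ := hbet
  constructor
  · intro p hp
    obtain ⟨hp1, hp3⟩ := hp
    rw [mem_ball, dist_comm] at hp1 hp3 ⊢
    rw [← hc]
    exact key_between p x c₁ c₃ a b ha hb hab hp1.le hp3.le (Or.inl hp1)
  · intro p hp
    obtain ⟨⟨hp1, hp3⟩, hpxy⟩ := hp
    rw [mem_closedBall, dist_comm] at hp1 hp3
    rw [mem_ball, dist_comm, ← hc]
    have hne : ¬(dist c₁ p = dist c₁ x ∧ dist c₃ p = dist c₃ x) := by
      rintro ⟨he1, he3⟩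
      rcases eq_or_eq_of_on_two_circles x y p c₁ c₃ hxy h₁ h₃ h₁₃ he1 he3 with h | h
      · exact hpxy (by simp [h])
      · exact hpxy (by simp [h])
    have hs : dist c₁ p < dist c₁ x ∨ dist c₃ p < dist c₃ x := by
      by_contra h
      push_neg at h
      exact hne ⟨le_antisymm hp1 h.1, le_antisymm hp3 h.2⟩
    exact key_between p x c₁ c₃ a b ha hb hab hp1 hp3 hs
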